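/- Fix n ≥ 1, r ≥ 1, real numbers 0 = x_{−1} < x₀ < x₁ < ⋯ < x_r = 1, symmetric positive semidefinite n×n real matrices Δ₁, …, Δ_r, a vector h ∈ ℝⁿ, and an n×n symmetric matrix Q. Then L is a convex subset of the symmetric n×n matrices and the function Λ ↦ (1/2)·tr(ΛQ) + F(Λ) is convex on L. -/

import Mathlib

open MeasureTheory Matrix Real

/-- The sequence `Λ_k` defined by the downward recursion `Λ_r = Λ`,
`Λ_k = Λ_{k+1} - x_k • Δ_{k+1}` for `0 ≤ k ≤ r-1`; in closed form
`Λ_k = Λ - ∑_{ℓ = k}^{r-1} x_ℓ • Δ_{ℓ+1}`. -/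
noncomputable def LamSeq (n r : ℕ) (x : ℕ → ℝ) (Δ : ℕ → Matrix (Fin n) (Fin n) ℝ)
    (Λ : Matrix (Fin n) (Fin n) ℝ) (k : ℕ) : Matrix (Fin n) (Fin n) ℝ :=
  Λ - ∑ ℓ ∈ Finset.Ico k r, x ℓ • Δ (ℓ + 1)

/-- The set `L` of symmetric positive semidefinite matrices `Λ` with `Λ₀` positive
definite. -/
def Lset (n r : ℕ) (x : ℕ → ℝ) (Δ : ℕ → Matrix (Fin n) (Fin n) ℝ) :
    Set (Matrix (Fin n) (Fin n) ℝ) :=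
  {Λ | Λ.PosSemidef ∧ (LamSeq n r x Δ Λ 0).PosDef}

/-- The functional
`F(Λ) = (1/2)( -log det Λ + ⟨Λ₀⁻¹ h, h⟩ + ∑_{k<r} (1/x_k) log(det Λ_{k+1}/det Λ_k) )`. -/
noncomputable def Ffun (n r : ℕ) (x : ℕ → ℝ) (Δ : ℕ → Matrix (Fin n) (Fin n) ℝ)
    (hvec : Fin n → ℝ) (Λ : Matrix (Fin n) (Fin n) ℝ) : ℝ :=
  (1 / 2) * (-Real.log Λ.det + ((LamSeq n r x Δ Λ 0)⁻¹.mulVec hvec ⬝ᵥ hvec)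
    + ∑ k ∈ Finset.range r,
        (1 / x k) * Real.log ((LamSeq n r x Δ Λ (k + 1)).det / (LamSeq n r x Δ Λ k).det))

section Stmt4Proof


variable {n : ℕ}

lemma psd_smul {A : Matrix (Fin n) (Fin n) ℝ} (hA : A.PosSemidef) {a : ℝ} (ha : 0 ≤ a) :
    (a • A).PosSemidef := by
  refine posSemidef_iff_dotProduct_mulVec.mpr ⟨?_, fun v => ?_⟩
  · unfold Matrix.IsHermitian
    rw [conjTranspose_smul, hA.1]
    simp
  · rw [smul_mulVec, dotProduct_smul]
    exact mul_nonneg ha (hA.dotProduct_mulVec_nonneg v)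

lemma pd_smul {A : Matrix (Fin n) (Fin n) ℝ} (hA : A.PosDef) {a : ℝ} (ha : 0 < a) :
    (a • A).PosDef := by
  refine posDef_iff_dotProduct_mulVec.mpr ⟨?_, fun v hv => ?_⟩
  · unfold Matrix.IsHermitian
    rw [conjTranspose_smul, hA.1]
    simp
  · rw [smul_mulVec, dotProduct_smul]
    exact mul_pos ha (hA.dotProduct_mulVec_pos hv)

lemma psd_sum {ι : Type*} (s : Finset ι) (f : ι → Matrix (Fin n) (Fin n) ℝ)
    (h : ∀ i ∈ s, (f i).PosSemidef) : (∑ i ∈ s, f i).PosSemidef := by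
  classical
  induction s using Finset.induction_on with
  | empty => simpa using (Matrix.PosSemidef.zero (n := Fin n) (R := ℝ))
  | insert a s hi ih =>
    rw [Finset.sum_insert hi]
    exact (h _ (by simp)).add (ih fun j hj => h j (by simp [hj]))

lemma pd_comb {A B : Matrix (Fin n) (Fin n) ℝ} (hA : A.PosDef) (hB : B.PosDef)
    {a b : ℝ} (ha : 0 ≤ a) (hb : 0 ≤ b) (hab : a + b = 1) :
    (a • A + b • B).PosDef := by
  rcases eq_or_lt_of_le ha with h0 | h0
  · have hb1 : b = 1 := by linarith
    simp [← h0, hb1, hB]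
  · exact (pd_smul hA h0).add_posSemidef (psd_smul hB.posSemidef hb)

lemma trace_psd_nonneg {A : Matrix (Fin n) (Fin n) ℝ} (hA : A.PosSemidef) : 0 ≤ A.trace := by
  rw [Matrix.trace]
  refine Finset.sum_nonneg fun i _ => ?_
  have := hA.dotProduct_mulVec_nonneg (Pi.single i 1)
  simpa [Matrix.mulVec_single, dotProduct, Pi.single_apply] using this

lemma trace_psd_mul_nonneg {S P : Matrix (Fin n) (Fin n) ℝ} (hS : S.PosSemidef)
    (hP : P.PosSemidef) : 0 ≤ (S * P).trace := by
  obtain ⟨B, rfl⟩ : ∃ B : Matrix (Fin n) (Fin n) ℝ, S = star B * B := by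
    open scoped MatrixOrder Matrix.Norms.L2Operator in
    exact CStarAlgebra.nonneg_iff_eq_star_mul_self.mp hS.nonneg
  rw [Matrix.mul_assoc, Matrix.trace_mul_comm]
  exact trace_psd_nonneg (hP.mul_mul_conjTranspose_same B)

lemma hasDerivAt_of_eq_add_mul {f g : ℝ → ℝ} {t₀ : ℝ} (hg : ContinuousAt g t₀)
    (hfg : ∀ᶠ t in nhds t₀, f t = f t₀ + (t - t₀) * g t) :
    HasDerivAt f (g t₀) t₀ := by
  rw [hasDerivAt_iff_tendsto_slope]
  have h1 : Filter.Tendsto g (nhdsWithin t₀ {t₀}ᶜ) (nhds (g t₀)) :=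
    hg.continuousWithinAt.tendsto
  refine h1.congr' ?_
  filter_upwards [self_mem_nhdsWithin,
    eventually_nhdsWithin_of_eventually_nhds hfg] with t ht hft
  have htt : t - t₀ ≠ 0 := sub_ne_zero.mpr ht
  rw [slope_def_field, hft]
  field_simp
  ring

lemma hasDerivAt_det_line (M N : Matrix (Fin n) (Fin n) ℝ) (t₀ : ℝ)
    (h : IsUnit (M + t₀ • N).det) :
    HasDerivAt (fun t => (M + t • N).det)
      ((M + t₀ • N).det * ((M + t₀ • N)⁻¹ * N).trace) t₀ := by
  set M₀ := M + t₀ • N with hM₀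
  set C : Matrix (Fin n) (Fin n) ℝ := M₀⁻¹ * N with hC
  set E := ((1 : Matrix (Fin n) (Fin n) (Polynomial ℝ))
      + (Polynomial.X : Polynomial ℝ) • C.map Polynomial.C).det.divX.divX with hE
  have key : ∀ t : ℝ, (M + t • N).det
      = M₀.det + (t - t₀) * (M₀.det * (C.trace + Polynomial.eval (t - t₀) E * (t - t₀))) := by
    intro t
    have hMt : M + t • N = M₀ * (1 + (t - t₀) • C) := by
      rw [Matrix.mul_add, Matrix.mul_one, Matrix.mul_smul, hC, ← Matrix.mul_assoc,
        Matrix.mul_nonsing_inv _ h, Matrix.one_mul, hM₀, sub_smul]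
      abel
    rw [hMt, Matrix.det_mul, Matrix.det_one_add_smul (t - t₀) C, ← hE]
    ring
  have hfg : ∀ᶠ t in nhds t₀, (M + t • N).det
      = (M + t₀ • N).det + (t - t₀) * (M₀.det * (C.trace + Polynomial.eval (t - t₀) E * (t - t₀))) := by
    filter_upwards with t
    rw [key t, hM₀]
  have hg : ContinuousAt (fun t : ℝ => M₀.det * (C.trace + Polynomial.eval (t - t₀) E * (t - t₀))) t₀ := by
    exact (continuous_const.mul (continuous_const.add
      ((E.continuous.comp (continuous_id.sub continuous_const)).mul
        (continuous_id.sub continuous_const)))).continuousAt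
  have := hasDerivAt_of_eq_add_mul hg hfg
  simpa using this

lemma hasDerivAt_log_det_line (M N : Matrix (Fin n) (Fin n) ℝ) (t₀ : ℝ)
    (h : (M + t₀ • N).PosDef) :
    HasDerivAt (fun t => Real.log (M + t • N).det) (((M + t₀ • N)⁻¹ * N).trace) t₀ := by
  have hu : IsUnit (M + t₀ • N).det := isUnit_iff_ne_zero.mpr h.det_pos.ne'
  have hd := (hasDerivAt_det_line M N t₀ hu).log h.det_pos.ne'
  have : (M + t₀ • N).det * ((M + t₀ • N)⁻¹ * N).trace / (M + t₀ • N).det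
      = ((M + t₀ • N)⁻¹ * N).trace := by
    rw [mul_comm, mul_div_assoc, div_self h.det_pos.ne', mul_one]
  rwa [this] at hd

lemma inv_sub_inv_mat {P Q : Matrix (Fin n) (Fin n) ℝ} (hP : IsUnit P.det) (hQ : IsUnit Q.det) :
    P⁻¹ - Q⁻¹ = P⁻¹ * (Q - P) * Q⁻¹ := by
  rw [Matrix.mul_sub, Matrix.sub_mul, Matrix.mul_assoc, Matrix.mul_nonsing_inv _ hQ,
    Matrix.mul_one, Matrix.nonsing_inv_mul _ hP, Matrix.one_mul]

lemma continuousAt_inv_line (W S : Matrix (Fin n) (Fin n) ℝ) (t₀ : ℝ)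
    (h : IsUnit (W + t₀ • S).det) :
    ContinuousAt (fun t : ℝ => (W + t • S)⁻¹) t₀ := by
  have hline : Continuous (fun t : ℝ => W + t • S) :=
    continuous_const.add (continuous_id.smul continuous_const)
  have h2 : ContinuousAt Ring.inverse ((W + t₀ • S).det) := by
    rw [Ring.inverse_eq_inv']
    exact continuousAt_inv₀ (isUnit_iff_ne_zero.mp h)
  exact ContinuousAt.comp (g := Inv.inv) (x := t₀) (continuousAt_matrix_inv _ h2)
    hline.continuousAt

lemma hasDerivAt_trace_inv_line (W S C : Matrix (Fin n) (Fin n) ℝ) (t₀ : ℝ)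
    (h : IsUnit (W + t₀ • S).det) :
    HasDerivAt (fun t => ((W + t • S)⁻¹ * C).trace)
      (-(((W + t₀ • S)⁻¹ * S * (W + t₀ • S)⁻¹ * C).trace)) t₀ := by
  set M₀ := W + t₀ • S with hM₀
  have hline : Continuous (fun t : ℝ => W + t • S) :=
    continuous_const.add (continuous_id.smul continuous_const)
  have hdet : Continuous fun t : ℝ => (W + t • S).det := hline.matrix_det
  have hev : ∀ᶠ t in nhds t₀, (W + t • S).det ≠ 0 :=
    hdet.continuousAt.eventually_ne (isUnit_iff_ne_zero.mp h)
  have hg : ContinuousAt (fun t : ℝ => -(((W + t • S)⁻¹ * S * M₀⁻¹ * C).trace)) t₀ := by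
    have hF : Continuous (fun A : Matrix (Fin n) (Fin n) ℝ => -((A * S * M₀⁻¹ * C).trace)) := by
      apply Continuous.neg
      apply Continuous.matrix_trace
      exact ((continuous_id.matrix_mul continuous_const).matrix_mul
        continuous_const).matrix_mul continuous_const
    exact hF.continuousAt.comp (continuousAt_inv_line W S t₀ h)
  apply hasDerivAt_of_eq_add_mul hg
  filter_upwards [hev] with t hdt
  have hut : IsUnit (W + t • S).det := isUnit_iff_ne_zero.mpr hdt
  have h2 : M₀ - (W + t • S) = (t₀ - t) • S := by
    rw [hM₀, sub_smul]; abel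
  have h3 : (W + t • S)⁻¹ - M₀⁻¹ = (t₀ - t) • ((W + t • S)⁻¹ * S * M₀⁻¹) := by
    rw [inv_sub_inv_mat hut h, h2, Matrix.mul_smul, Matrix.smul_mul]
  have hid : (W + t • S)⁻¹ = M₀⁻¹ + (t₀ - t) • ((W + t • S)⁻¹ * S * M₀⁻¹) :=
    sub_eq_iff_eq_add'.mp h3
  have h4 : ((W + t • S)⁻¹ * C).trace
      = (M₀⁻¹ * C).trace + (t₀ - t) * (((W + t • S)⁻¹ * S * M₀⁻¹ * C).trace) := by
    conv_lhs => rw [hid]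
    rw [Matrix.add_mul, Matrix.smul_mul, trace_add, trace_smul, smul_eq_mul]
  rw [h4]
  ring

lemma logdet_tangent {A W : Matrix (Fin n) (Fin n) ℝ} (hA : A.PosDef) (hW : W.PosDef) :
    Real.log A.det ≤ Real.log W.det + ((W⁻¹ * (A - W)).trace) := by
  set N := A - W with hN
  have hseg : ∀ t ∈ Set.Icc (0:ℝ) 1, (W + t • N).PosDef := by
    intro t ht
    have hidt : W + t • N = (1 - t) • W + t • A := by
      rw [hN, smul_sub, sub_smul, one_smul]; abel
    rw [hidt]
    exact pd_comb hW hA (by linarith [ht.2]) ht.1 (by ring)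
  set c : ℝ := (W⁻¹ * N).trace with hc
  set m : ℝ → ℝ := fun t => Real.log (W + t • N).det - t * c with hm
  have hline : Continuous (fun t : ℝ => W + t • N) :=
    continuous_const.add (continuous_id.smul continuous_const)
  have hanti : AntitoneOn m (Set.Icc 0 1) := by
    apply antitoneOn_of_deriv_nonpos (convex_Icc 0 1)
    · intro t ht
      refine ContinuousWithinAt.sub ?_ ?_
      · exact (ContinuousAt.comp (g := Real.log) (x := t)
          (Real.continuousAt_log (hseg t ht).det_pos.ne')
          hline.matrix_det.continuousAt).continuousWithinAt
      · exact ((continuous_id.mul continuous_const).continuousAt).continuousWithinAt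
    · intro t ht
      rw [interior_Icc] at ht
      have h1 := (hasDerivAt_log_det_line W N t (hseg t ⟨ht.1.le, ht.2.le⟩)).sub
        (hasDerivAt_mul_const (x := t) c)
      exact h1.differentiableAt.differentiableWithinAt
    · intro t ht
      rw [interior_Icc] at ht
      have hPD := hseg t ⟨ht.1.le, ht.2.le⟩
      have h1 := (hasDerivAt_log_det_line W N t hPD).sub (hasDerivAt_mul_const (x := t) c)
      rw [show deriv m t = _ from h1.deriv]
      -- ((W + t•N)⁻¹ * N).trace - c ≤ 0
      have hMu : IsUnit (W + t • N).det := isUnit_iff_ne_zero.mpr hPD.det_pos.ne'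
      have hWu : IsUnit W.det := isUnit_iff_ne_zero.mpr hW.det_pos.ne'
      have h2 : (W + t • N)⁻¹ - W⁻¹ = -(t • ((W + t • N)⁻¹ * (N * W⁻¹))) := by
        rw [inv_sub_inv_mat hMu hWu]
        have : W - (W + t • N) = -(t • N) := by abel
        rw [this, Matrix.mul_neg, Matrix.neg_mul, Matrix.mul_smul, Matrix.smul_mul,
          Matrix.mul_assoc]
      have h3 : ((W + t • N)⁻¹ * N).trace - c
          = -(t * (((W + t • N)⁻¹ * (N * W⁻¹ * N)).trace)) := by
        rw [hc, ← trace_sub, ← Matrix.sub_mul, h2]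
        rw [Matrix.neg_mul, Matrix.smul_mul, trace_neg, trace_smul, smul_eq_mul,
          Matrix.mul_assoc, Matrix.mul_assoc]
      rw [h3, neg_nonpos]
      apply mul_nonneg ht.1.le
      apply trace_psd_mul_nonneg hPD.inv.posSemidef
      have hNh : N.IsHermitian := hA.1.sub hW.1
      have := hW.inv.posSemidef.conjTranspose_mul_mul_same N
      rwa [hNh.eq] at this
  have hfin := hanti (Set.left_mem_Icc.mpr zero_le_one) (Set.right_mem_Icc.mpr zero_le_one)
    zero_le_one
  have hWN : W + (1:ℝ) • N = A := by rw [one_smul, hN]; abel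
  have hm1 : m 1 = Real.log A.det - c := by
    simp only [hm]
    rw [hWN, one_mul]
  have hm0 : m 0 = Real.log W.det := by simp [hm]
  rw [hm1, hm0] at hfin
  linarith

lemma gfun_tangent {A W S : Matrix (Fin n) (Fin n) ℝ} (hA : A.PosDef) (hW : W.PosDef)
    (hS : S.PosSemidef) :
    Real.log A.det - Real.log W.det - ((W⁻¹ * (A - W)).trace)
      ≤ Real.log (A + S).det - Real.log (W + S).det - (((W + S)⁻¹ * (A - W)).trace) := by
  set N := A - W with hN
  have hNh : N.IsHermitian := hA.1.sub hW.1
  have hApd : ∀ t ∈ Set.Icc (0:ℝ) 1, (A + t • S).PosDef :=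
    fun t ht => hA.add_posSemidef (psd_smul hS ht.1)
  have hWpd : ∀ t ∈ Set.Icc (0:ℝ) 1, (W + t • S).PosDef :=
    fun t ht => hW.add_posSemidef (psd_smul hS ht.1)
  set h : ℝ → ℝ := fun t => Real.log (A + t • S).det - Real.log (W + t • S).det
    - (((W + t • S)⁻¹ * N).trace) with hh
  have hlineA : Continuous (fun t : ℝ => A + t • S) :=
    continuous_const.add (continuous_id.smul continuous_const)
  have hlineW : Continuous (fun t : ℝ => W + t • S) :=
    continuous_const.add (continuous_id.smul continuous_const)
  have hmono : MonotoneOn h (Set.Icc 0 1) := by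
    apply monotoneOn_of_deriv_nonneg (convex_Icc 0 1)
    · intro t ht
      refine ContinuousWithinAt.sub (ContinuousWithinAt.sub ?_ ?_) ?_
      · exact (ContinuousAt.comp (g := Real.log) (x := t)
          (Real.continuousAt_log (hApd t ht).det_pos.ne')
          hlineA.matrix_det.continuousAt).continuousWithinAt
      · exact (ContinuousAt.comp (g := Real.log) (x := t)
          (Real.continuousAt_log (hWpd t ht).det_pos.ne')
          hlineW.matrix_det.continuousAt).continuousWithinAt
      · have hF : Continuous (fun M : Matrix (Fin n) (Fin n) ℝ => ((M * N).trace)) :=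
          (continuous_id.matrix_mul continuous_const).matrix_trace
        exact (hF.continuousAt.comp (continuousAt_inv_line W S t
          (isUnit_iff_ne_zero.mpr (hWpd t ht).det_pos.ne'))).continuousWithinAt
    · intro t ht
      rw [interior_Icc] at ht
      have ht' : t ∈ Set.Icc (0:ℝ) 1 := ⟨ht.1.le, ht.2.le⟩
      have hWu : IsUnit (W + t • S).det := isUnit_iff_ne_zero.mpr (hWpd t ht').det_pos.ne'
      exact (((hasDerivAt_log_det_line A S t (hApd t ht')).sub
        (hasDerivAt_log_det_line W S t (hWpd t ht'))).sub
        (hasDerivAt_trace_inv_line W S N t hWu)).differentiableAt.differentiableWithinAt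
    · intro t ht
      rw [interior_Icc] at ht
      have ht' : t ∈ Set.Icc (0:ℝ) 1 := ⟨ht.1.le, ht.2.le⟩
      have hAt := hApd t ht'
      have hWt := hWpd t ht'
      have hAtu : IsUnit (A + t • S).det := isUnit_iff_ne_zero.mpr hAt.det_pos.ne'
      have hWtu : IsUnit (W + t • S).det := isUnit_iff_ne_zero.mpr hWt.det_pos.ne'
      have hd := ((hasDerivAt_log_det_line A S t hAt).sub
        (hasDerivAt_log_det_line W S t hWt)).sub
        (hasDerivAt_trace_inv_line W S N t hWtu)
      rw [show deriv h t = _ from hd.deriv]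
      set At := A + t • S with hAtdef
      set Wt := W + t • S with hWtdef
      set X : Matrix (Fin n) (Fin n) ℝ := At⁻¹ - Wt⁻¹ with hX
      have hXh : X.IsHermitian := by
        have hAth : At.IsHermitian := hA.1.add (psd_smul hS ht.1.le).1
        have hWth : Wt.IsHermitian := hW.1.add (psd_smul hS ht.1.le).1
        exact hAth.inv.sub hWth.inv
      have e1 : X * At = 1 - Wt⁻¹ * At := by
        rw [hX, Matrix.sub_mul, Matrix.nonsing_inv_mul _ hAtu]
      have e3 : Wt⁻¹ * At * X = Wt⁻¹ - Wt⁻¹ * At * Wt⁻¹ := by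
        rw [hX, Matrix.mul_sub, Matrix.mul_assoc Wt⁻¹ At At⁻¹,
          Matrix.mul_nonsing_inv _ hAtu, Matrix.mul_one]
      have e4 : X * At * X = (At⁻¹ - Wt⁻¹) - (Wt⁻¹ - Wt⁻¹ * At * Wt⁻¹) := by
        rw [e1, Matrix.sub_mul, Matrix.one_mul, e3, hX]
      have psdXAX : (X * At * X).PosSemidef := by
        have := hAt.posSemidef.conjTranspose_mul_mul_same X
        rwa [hXh.eq] at this
      have pos := trace_psd_mul_nonneg hS psdXAX
      have expand : (S * (X * At * X)).trace
          = ((S * At⁻¹).trace - (S * Wt⁻¹).trace)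
            - ((S * Wt⁻¹).trace - (S * (Wt⁻¹ * At * Wt⁻¹)).trace) := by
        rw [e4]
        simp only [Matrix.mul_sub, trace_sub]
      have hNt : N = At - Wt := by rw [hAtdef, hWtdef, hN]; abel
      have eN : Wt⁻¹ * N = Wt⁻¹ * At - 1 := by
        rw [hNt, Matrix.mul_sub, Matrix.nonsing_inv_mul _ hWtu]
      have eN2 : Wt⁻¹ * S * Wt⁻¹ * N = Wt⁻¹ * S * Wt⁻¹ * At - Wt⁻¹ * S := by
        rw [hNt, Matrix.mul_sub, Matrix.mul_assoc (Wt⁻¹ * S) Wt⁻¹ Wt,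
          Matrix.nonsing_inv_mul _ hWtu, Matrix.mul_one]
      have cyc : (S * (Wt⁻¹ * At * Wt⁻¹)).trace = (Wt⁻¹ * S * Wt⁻¹ * At).trace := by
        have a1 : S * (Wt⁻¹ * At * Wt⁻¹) = S * Wt⁻¹ * At * Wt⁻¹ := by
          simp only [Matrix.mul_assoc]
        have a2 : Wt⁻¹ * (S * Wt⁻¹) * At = Wt⁻¹ * S * Wt⁻¹ * At := by
          simp only [Matrix.mul_assoc]
        rw [a1, trace_mul_cycle (S * Wt⁻¹) At Wt⁻¹, a2]
      have c1 : (S * At⁻¹).trace = (At⁻¹ * S).trace := trace_mul_comm _ _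
      have c2 : (S * Wt⁻¹).trace = (Wt⁻¹ * S).trace := trace_mul_comm _ _
      have goalform : (0:ℝ) ≤ (At⁻¹ * S).trace - (Wt⁻¹ * S).trace
          - (-((Wt⁻¹ * S * Wt⁻¹ * N).trace)) := by
        rw [eN2, trace_sub]
        rw [expand, cyc, c1, c2] at pos
        linarith
      exact goalform
  have hfin := hmono (Set.left_mem_Icc.mpr zero_le_one) (Set.right_mem_Icc.mpr zero_le_one)
    zero_le_one
  have h0 : h 0 = Real.log A.det - Real.log W.det - ((W⁻¹ * N).trace) := by
    simp [hh]
  have h1 : h 1 = Real.log (A + S).det - Real.log (W + S).det - (((W + S)⁻¹ * N).trace) := by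
    simp [hh]
  rw [h0, h1] at hfin
  exact hfin

lemma symm_real {A : Matrix (Fin n) (Fin n) ℝ} (hA : A.IsHermitian) : Aᵀ = A := by
  rw [← conjTranspose_eq_transpose_of_trivial]
  exact hA.eq

lemma quad_aux {A : Matrix (Fin n) (Fin n) ℝ} (hA : A.PosDef) (hv y : Fin n → ℝ) :
    2 * (hv ⬝ᵥ y) - (A *ᵥ y) ⬝ᵥ y ≤ (A⁻¹ *ᵥ hv) ⬝ᵥ hv := by
  have hu : IsUnit A.det := isUnit_iff_ne_zero.mpr hA.det_pos.ne'
  set z := A⁻¹ *ᵥ hv - y with hzdef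
  have hz : A *ᵥ z = hv - A *ᵥ y := by
    rw [hzdef, Matrix.mulVec_sub, Matrix.mulVec_mulVec, Matrix.mul_nonsing_inv _ hu,
      Matrix.one_mulVec]
  have hpos : 0 ≤ z ⬝ᵥ (A *ᵥ z) := by
    have := hA.posSemidef.dotProduct_mulVec_nonneg z
    simpa using this
  have key : (A⁻¹ *ᵥ hv) ⬝ᵥ (A *ᵥ y) = hv ⬝ᵥ y := by
    rw [Matrix.dotProduct_mulVec, ← Matrix.mulVec_transpose, symm_real hA.1,
      Matrix.mulVec_mulVec, Matrix.mul_nonsing_inv _ hu, Matrix.one_mulVec]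
  rw [hz, hzdef] at hpos
  rw [sub_dotProduct, dotProduct_sub, dotProduct_sub, key] at hpos
  have hc1 : y ⬝ᵥ (A *ᵥ y) = (A *ᵥ y) ⬝ᵥ y := dotProduct_comm _ _
  have hc2 : y ⬝ᵥ hv = hv ⬝ᵥ y := dotProduct_comm _ _
  rw [hc1, hc2] at hpos
  linarith

lemma quad_convex {A B : Matrix (Fin n) (Fin n) ℝ} (hA : A.PosDef) (hB : B.PosDef)
    {a b : ℝ} (ha : 0 ≤ a) (hb : 0 ≤ b) (hab : a + b = 1) (hv : Fin n → ℝ) :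
    ((a • A + b • B)⁻¹ *ᵥ hv) ⬝ᵥ hv
      ≤ a * ((A⁻¹ *ᵥ hv) ⬝ᵥ hv) + b * ((B⁻¹ *ᵥ hv) ⬝ᵥ hv) := by
  set W := a • A + b • B with hWdef
  have hW : W.PosDef := pd_comb hA hB ha hb hab
  have hu : IsUnit W.det := isUnit_iff_ne_zero.mpr hW.det_pos.ne'
  set y := W⁻¹ *ᵥ hv with hy
  have hWy : W *ᵥ y = hv := by
    rw [hy, Matrix.mulVec_mulVec, Matrix.mul_nonsing_inv _ hu, Matrix.one_mulVec]
  have hWyy : (W *ᵥ y) ⬝ᵥ y = a * ((A *ᵥ y) ⬝ᵥ y) + b * ((B *ᵥ y) ⬝ᵥ y) := by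
    rw [hWdef, Matrix.add_mulVec, add_dotProduct, Matrix.smul_mulVec,
      Matrix.smul_mulVec, smul_dotProduct, smul_dotProduct,
      smul_eq_mul, smul_eq_mul]
  have hvy : (W⁻¹ *ᵥ hv) ⬝ᵥ hv = hv ⬝ᵥ y := by
    rw [hy, dotProduct_comm]
  have qA := quad_aux hA hv y
  have qB := quad_aux hB hv y
  have hq : (W *ᵥ y) ⬝ᵥ y = hv ⬝ᵥ y := by rw [hWy, dotProduct_comm]
  have h2 : a * (hv ⬝ᵥ y) + b * (hv ⬝ᵥ y) = hv ⬝ᵥ y := by rw [← add_mul, hab, one_mul]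
  have haq := mul_le_mul_of_nonneg_left qA ha
  have hbq := mul_le_mul_of_nonneg_left qB hb
  rw [hvy]
  nlinarith [haq, hbq, hWyy, hq, h2]

lemma comb_zero {A B W : Matrix (Fin n) (Fin n) ℝ} {a b : ℝ} (hab : a + b = 1)
    (hWdef : W = a • A + b • B) : a • (A - W) + b • (B - W) = 0 := by
  have h1 : a • W + b • W = W := by rw [← add_smul, hab, one_smul]
  have : a • (A - W) + b • (B - W) = (a • A + b • B) - (a • W + b • W) := by
    rw [smul_sub, smul_sub]; abel
  rw [this, h1, ← hWdef, sub_self]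

lemma trace_comb_zero {A B W G : Matrix (Fin n) (Fin n) ℝ} {a b : ℝ} (hab : a + b = 1)
    (hWdef : W = a • A + b • B) :
    a * ((G * (A - W)).trace) + b * ((G * (B - W)).trace) = 0 := by
  have h0 : (G * (a • (A - W) + b • (B - W))).trace = 0 := by
    rw [comb_zero hab hWdef, Matrix.mul_zero, trace_zero]
  rw [Matrix.mul_add, Matrix.mul_smul, Matrix.mul_smul, trace_add, trace_smul, trace_smul,
    smul_eq_mul, smul_eq_mul] at h0
  exact h0

lemma logdet_concave_comb {A B : Matrix (Fin n) (Fin n) ℝ} (hA : A.PosDef) (hB : B.PosDef)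
    {a b : ℝ} (ha : 0 ≤ a) (hb : 0 ≤ b) (hab : a + b = 1) :
    a * Real.log A.det + b * Real.log B.det ≤ Real.log (a • A + b • B).det := by
  set W := a • A + b • B with hWdef
  have hW : W.PosDef := pd_comb hA hB ha hb hab
  have tA := logdet_tangent hA hW
  have tB := logdet_tangent hB hW
  have h2 := trace_comb_zero (G := W⁻¹) hab hWdef
  have h3 : a * Real.log W.det + b * Real.log W.det = Real.log W.det := by
    rw [← add_mul, hab, one_mul]
  have haA := mul_le_mul_of_nonneg_left tA ha
  have hbB := mul_le_mul_of_nonneg_left tB hb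
  nlinarith [haA, hbB, h2, h3]

lemma gfun_convex_comb {A B S : Matrix (Fin n) (Fin n) ℝ} (hA : A.PosDef) (hB : B.PosDef)
    (hS : S.PosSemidef) {a b : ℝ} (ha : 0 ≤ a) (hb : 0 ≤ b) (hab : a + b = 1) :
    Real.log ((a • A + b • B) + S).det - Real.log (a • A + b • B).det
      ≤ a * (Real.log (A + S).det - Real.log A.det)
        + b * (Real.log (B + S).det - Real.log B.det) := by
  set W := a • A + b • B with hWdef
  have hW : W.PosDef := pd_comb hA hB ha hb hab
  have tA := gfun_tangent hA hW hS
  have tB := gfun_tangent hB hW hS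
  have h2 := trace_comb_zero (G := W⁻¹) hab hWdef
  have h2S := trace_comb_zero (G := (W + S)⁻¹) hab hWdef
  have h3 : a * Real.log W.det + b * Real.log W.det = Real.log W.det := by
    rw [← add_mul, hab, one_mul]
  have h4 : a * Real.log (W + S).det + b * Real.log (W + S).det = Real.log (W + S).det := by
    rw [← add_mul, hab, one_mul]
  have haA := mul_le_mul_of_nonneg_left tA ha
  have hbB := mul_le_mul_of_nonneg_left tB hb
  nlinarith [haA, hbB, h2, h2S, h3, h4]

lemma abel_sum (u L : ℕ → ℝ) (r : ℕ) :
    ∑ k ∈ Finset.range r, u k * (L (k+1) - L k)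
      = (∑ k ∈ Finset.range r, (u k - u (k+1)) * (L (k+1) - L 0)) + u r * (L r - L 0) := by
  induction r with
  | zero => simp
  | succ r ih =>
    rw [Finset.sum_range_succ, Finset.sum_range_succ, ih]
    ring

section Assembly

variable {r : ℕ} {x : ℕ → ℝ} {Δ : ℕ → Matrix (Fin n) (Fin n) ℝ}

lemma lamseq_r (Λ : Matrix (Fin n) (Fin n) ℝ) : LamSeq n r x Δ Λ r = Λ := by
  unfold LamSeq; simp

lemma lamseq_eq (Λ : Matrix (Fin n) (Fin n) ℝ) {k : ℕ} (hk : k ≤ r) :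
    LamSeq n r x Δ Λ k = LamSeq n r x Δ Λ 0 + ∑ ℓ ∈ Finset.range k, x ℓ • Δ (ℓ + 1) := by
  unfold LamSeq
  have hsum : (∑ ℓ ∈ Finset.Ico 0 k, x ℓ • Δ (ℓ + 1)) + ∑ ℓ ∈ Finset.Ico k r, x ℓ • Δ (ℓ + 1)
      = ∑ ℓ ∈ Finset.Ico 0 r, x ℓ • Δ (ℓ + 1) :=
    Finset.sum_Ico_consecutive _ (Nat.zero_le k) hk
  rw [Finset.range_eq_Ico, ← hsum]
  abel

lemma xpos (hx0 : 0 < x 0) (hxmono : ∀ k < r, x k < x (k + 1)) :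
    ∀ k ≤ r, 0 < x k := by
  intro k
  induction k with
  | zero => exact fun _ => hx0
  | succ k ih =>
    intro hk
    exact lt_trans (ih (Nat.le_of_succ_le hk)) (hxmono k (Nat.lt_of_succ_le hk))

lemma Ssum_psd (hx0 : 0 < x 0) (hxmono : ∀ k < r, x k < x (k + 1))
    (hΔ : ∀ k, 1 ≤ k → k ≤ r → (Δ k).PosSemidef) {k : ℕ} (hk : k ≤ r) :
    (∑ ℓ ∈ Finset.range k, x ℓ • Δ (ℓ + 1)).PosSemidef := by
  apply psd_sum
  intro ℓ hℓ
  rw [Finset.mem_range] at hℓ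
  have hℓr : ℓ + 1 ≤ r := Nat.succ_le_of_lt (lt_of_lt_of_le hℓ hk)
  exact psd_smul (hΔ (ℓ + 1) (Nat.le_add_left 1 ℓ) hℓr)
    (xpos hx0 hxmono ℓ (Nat.le_of_succ_le hℓr)).le

lemma lamseq_pd (hx0 : 0 < x 0) (hxmono : ∀ k < r, x k < x (k + 1))
    (hΔ : ∀ k, 1 ≤ k → k ≤ r → (Δ k).PosSemidef)
    {Λ : Matrix (Fin n) (Fin n) ℝ} (hΛ : Λ ∈ Lset n r x Δ) {k : ℕ} (hk : k ≤ r) :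
    (LamSeq n r x Δ Λ k).PosDef := by
  rw [lamseq_eq Λ hk]
  exact hΛ.2.add_posSemidef (Ssum_psd hx0 hxmono hΔ hk)

lemma lamseq_comb {a b : ℝ} (hab : a + b = 1) (Λ M : Matrix (Fin n) (Fin n) ℝ) (k : ℕ) :
    LamSeq n r x Δ (a • Λ + b • M) k = a • LamSeq n r x Δ Λ k + b • LamSeq n r x Δ M k := by
  unfold LamSeq
  set S := ∑ ℓ ∈ Finset.Ico k r, x ℓ • Δ (ℓ + 1) with hS
  have h1 : a • S + b • S = S := by rw [← add_smul, hab, one_smul]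
  rw [smul_sub, smul_sub]
  calc a • Λ + b • M - S = a • Λ + b • M - (a • S + b • S) := by rw [h1]
  _ = a • Λ - a • S + (b • M - b • S) := by abel

lemma Lset_convex : Convex ℝ (Lset n r x Δ) := by
  intro Λ hΛ M hM a b ha hb hab
  refine ⟨(psd_smul hΛ.1 ha).add (psd_smul hM.1 hb), ?_⟩
  rw [lamseq_comb hab]
  exact pd_comb hΛ.2 hM.2 ha hb hab

lemma Ffun_form (hx0 : 0 < x 0) (hxmono : ∀ k < r, x k < x (k + 1)) (hxr : x r = 1)
    (hΔ : ∀ k, 1 ≤ k → k ≤ r → (Δ k).PosSemidef) (hvec : Fin n → ℝ)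
    {Λ : Matrix (Fin n) (Fin n) ℝ} (hΛ : Λ ∈ Lset n r x Δ) :
    Ffun n r x Δ hvec Λ = (1 / 2) * (((LamSeq n r x Δ Λ 0)⁻¹ *ᵥ hvec) ⬝ᵥ hvec
      - Real.log (LamSeq n r x Δ Λ 0).det
      + ∑ k ∈ Finset.range r, ((x k)⁻¹ - (x (k + 1))⁻¹) *
          (Real.log (LamSeq n r x Δ Λ 0 + ∑ ℓ ∈ Finset.range (k + 1), x ℓ • Δ (ℓ + 1)).det
            - Real.log (LamSeq n r x Δ Λ 0).det)) := by
  set L : ℕ → ℝ := fun k => Real.log ((LamSeq n r x Δ Λ k).det) with hL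
  have hdet : ∀ k ≤ r, (LamSeq n r x Δ Λ k).det ≠ 0 :=
    fun k hk => (lamseq_pd hx0 hxmono hΔ hΛ hk).det_pos.ne'
  have h1 : Real.log Λ.det = L r := by rw [hL]; simp only [lamseq_r]
  have h2 : ∑ k ∈ Finset.range r,
        (1 / x k) * Real.log ((LamSeq n r x Δ Λ (k + 1)).det / (LamSeq n r x Δ Λ k).det)
      = ∑ k ∈ Finset.range r, (x k)⁻¹ * (L (k + 1) - L k) := by
    apply Finset.sum_congr rfl
    intro k hk
    rw [Finset.mem_range] at hk
    rw [Real.log_div (hdet (k + 1) (Nat.succ_le_of_lt hk)) (hdet k hk.le), one_div]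
  have h3 : ∀ k ∈ Finset.range r, (x k)⁻¹ * (L (k + 1) - L k)
      = (x k)⁻¹ * (L (k + 1) - L k) := fun _ _ => rfl
  have habel := abel_sum (fun k => (x k)⁻¹) L r
  have hur : (x r)⁻¹ = 1 := by rw [hxr, inv_one]
  have h4 : ∀ k ∈ Finset.range r, ((x k)⁻¹ - (x (k + 1))⁻¹) * (L (k + 1) - L 0)
      = ((x k)⁻¹ - (x (k + 1))⁻¹) *
          (Real.log (LamSeq n r x Δ Λ 0 + ∑ ℓ ∈ Finset.range (k + 1), x ℓ • Δ (ℓ + 1)).det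
            - Real.log (LamSeq n r x Δ Λ 0).det) := by
    intro k hk
    rw [Finset.mem_range] at hk
    rw [hL]
    simp only
    rw [← lamseq_eq Λ (Nat.succ_le_of_lt hk)]
  unfold Ffun
  rw [h1, h2, habel, hur, ← Finset.sum_congr rfl h4]
  ring

end Assembly

lemma FF_convex (hvec : Fin n → ℝ) (r : ℕ) (c : ℕ → ℝ) (T : ℕ → Matrix (Fin n) (Fin n) ℝ)
    (hc : ∀ k ∈ Finset.range r, 0 ≤ c k) (hT : ∀ k ∈ Finset.range r, (T k).PosSemidef)
    {A B : Matrix (Fin n) (Fin n) ℝ} (hA : A.PosDef) (hB : B.PosDef)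
    {a b : ℝ} (ha : 0 ≤ a) (hb : 0 ≤ b) (hab : a + b = 1) :
    ((a • A + b • B)⁻¹ *ᵥ hvec) ⬝ᵥ hvec - Real.log (a • A + b • B).det
      + ∑ k ∈ Finset.range r, c k *
          (Real.log ((a • A + b • B) + T k).det - Real.log (a • A + b • B).det)
    ≤ a * (((A)⁻¹ *ᵥ hvec) ⬝ᵥ hvec - Real.log A.det
        + ∑ k ∈ Finset.range r, c k * (Real.log (A + T k).det - Real.log A.det))
      + b * (((B)⁻¹ *ᵥ hvec) ⬝ᵥ hvec - Real.log B.det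
        + ∑ k ∈ Finset.range r, c k * (Real.log (B + T k).det - Real.log B.det)) := by
  have hq := quad_convex hA hB ha hb hab hvec
  have hld := logdet_concave_comb hA hB ha hb hab
  have hsum : ∑ k ∈ Finset.range r, c k *
        (Real.log ((a • A + b • B) + T k).det - Real.log (a • A + b • B).det)
      ≤ ∑ k ∈ Finset.range r,
          (a * (c k * (Real.log (A + T k).det - Real.log A.det))
            + b * (c k * (Real.log (B + T k).det - Real.log B.det))) := by
    apply Finset.sum_le_sum
    intro k hk
    have hg := gfun_convex_comb hA hB (hT k hk) ha hb hab
    calc c k * (Real.log ((a • A + b • B) + T k).det - Real.log (a • A + b • B).det)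
        ≤ c k * (a * (Real.log (A + T k).det - Real.log A.det)
            + b * (Real.log (B + T k).det - Real.log B.det)) :=
          mul_le_mul_of_nonneg_left hg (hc k hk)
      _ = a * (c k * (Real.log (A + T k).det - Real.log A.det))
            + b * (c k * (Real.log (B + T k).det - Real.log B.det)) := by ring
  rw [Finset.sum_add_distrib, ← Finset.mul_sum, ← Finset.mul_sum] at hsum
  nlinarith [hq, hld, hsum]

end Stmt4Proof

/-- The set `L` is convex and `Λ ↦ (1/2) tr(ΛQ) + F(Λ)` is convex
on `L`. -/
theorem stmt4 (n r : ℕ) (hn : 1 ≤ n) (hr : 1 ≤ r)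
    (x : ℕ → ℝ) (hx0 : 0 < x 0) (hxmono : ∀ k < r, x k < x (k + 1)) (hxr : x r = 1)
    (Δ : ℕ → Matrix (Fin n) (Fin n) ℝ) (hΔ : ∀ k, 1 ≤ k → k ≤ r → (Δ k).PosSemidef)
    (hvec : Fin n → ℝ)
    (Q : Matrix (Fin n) (Fin n) ℝ) (hQsymm : Q.IsSymm) :
    Convex ℝ (Lset n r x Δ) ∧
      ConvexOn ℝ (Lset n r x Δ)
        (fun Λ => (1 / 2) * (Λ * Q).trace + Ffun n r x Δ hvec Λ) := by
  refine ⟨Lset_convex, Lset_convex, ?_⟩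
  intro Λ hΛ M hM a b ha hb hab
  simp only
  have hcomb : a • Λ + b • M ∈ Lset n r x Δ := Lset_convex hΛ hM ha hb hab
  have htr : ((a • Λ + b • M) * Q).trace = a * (Λ * Q).trace + b * (M * Q).trace := by
    rw [Matrix.add_mul, Matrix.smul_mul, Matrix.smul_mul, trace_add, trace_smul, trace_smul,
      smul_eq_mul, smul_eq_mul]
  rw [Ffun_form hx0 hxmono hxr hΔ hvec hΛ, Ffun_form hx0 hxmono hxr hΔ hvec hM,
    Ffun_form hx0 hxmono hxr hΔ hvec hcomb, htr, lamseq_comb hab Λ M 0]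
  have hc : ∀ k ∈ Finset.range r, 0 ≤ (x k)⁻¹ - (x (k + 1))⁻¹ := by
    intro k hk
    rw [Finset.mem_range] at hk
    have hk1 : 0 < x k := xpos hx0 hxmono k hk.le
    have hk2 : x k < x (k + 1) := hxmono k hk
    have : (x (k + 1))⁻¹ ≤ (x k)⁻¹ := by
      exact inv_anti₀ hk1 hk2.le
    linarith
  have hT : ∀ k ∈ Finset.range r, (∑ ℓ ∈ Finset.range (k + 1), x ℓ • Δ (ℓ + 1)).PosSemidef := by
    intro k hk
    rw [Finset.mem_range] at hk
    exact Ssum_psd hx0 hxmono hΔ (Nat.succ_le_of_lt hk)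
  have key := FF_convex hvec r (fun k => (x k)⁻¹ - (x (k + 1))⁻¹)
    (fun k => ∑ ℓ ∈ Finset.range (k + 1), x ℓ • Δ (ℓ + 1)) hc hT hΛ.2 hM.2 ha hb hab
  beta_reduce at key
  simp only [smul_eq_mul]
  linarith [key]
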